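/- For every integer n ≥ 1 and every integer r ≥ 1, setting A = (5/4)·(1 + n^(−1/2))^(−1/(2n)), there exists a sequence X : Fin N → (Fin r → ZMod n) with N = ⌊(n/2)·A^r⌋ containing no zero-sum subsequence of length 2n; that is, s_{2n}(C_n^r) > (n/2)·((5/4)·(1 + n^(−1/2))^(−1/(2n)))^r. -/

import Mathlib

lemma central_sq (n : ℕ) : (3*n+1) * (Nat.centralBinom n)^2 ≤ 16^n := by
  induction n with
  | zero => simp [Nat.centralBinom]
  | succ n ih =>
    have hrec := Nat.succ_mul_centralBinom_succ n
    have hpos : 0 < (n+1)^2 := by positivity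
    have key : (n+1)^2 * ((3*(n+1)+1) * (Nat.centralBinom (n+1))^2)
        ≤ (n+1)^2 * 16^(n+1) := by
      have h1 : (n+1)^2 * ((3*(n+1)+1) * (Nat.centralBinom (n+1))^2)
          = (3*n+4) * ((n+1) * Nat.centralBinom (n+1))^2 := by ring
      rw [h1, hrec]
      have h2 : (3*n+4) * (2 * (2*n+1) * Nat.centralBinom n)^2
          = (4*(3*n+4)*(2*n+1)^2) * (Nat.centralBinom n)^2 := by ring
      rw [h2]
      calc (4*(3*n+4)*(2*n+1)^2) * (Nat.centralBinom n)^2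
          ≤ (16*(n+1)^2*(3*n+1)) * (Nat.centralBinom n)^2 := by
            apply Nat.mul_le_mul_right
            nlinarith
        _ = (16*(n+1)^2) * ((3*n+1) * (Nat.centralBinom n)^2) := by ring
        _ ≤ (16*(n+1)^2) * 16^n := Nat.mul_le_mul_left _ ih
        _ = (n+1)^2 * 16^(n+1) := by ring
    exact Nat.le_of_mul_le_mul_left key hpos

lemma sixteen_mul_le (n : ℕ) (hn : 1 ≤ n) : 16*n ≤ 16^n := by
  induction n with
  | zero => omega
  | succ n ih =>
    rcases Nat.eq_zero_or_pos n with h | h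
    · subst h; norm_num
    · have a := ih h
      have b : (16:ℕ) ≤ 16^n := by
        calc (16:ℕ) = 16^1 := (pow_one 16).symm
          _ ≤ 16^n := Nat.pow_le_pow_right (by norm_num) h
      rw [pow_succ]
      omega

lemma key_nat (n : ℕ) (hn : 1 ≤ n) :
    n * (Nat.centralBinom n * 4^n + 1)^2 ≤ 256^n := by
  have h1 := central_sq n
  have h16 : (16:ℕ)^n = (4^n)^2 := by rw [← pow_mul, pow_mul']; norm_num
  have h256 : (256:ℕ)^n = (4^n)^4 := by rw [← pow_mul, pow_mul']; norm_num
  have h16n := sixteen_mul_le n hn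
  have hC : Nat.centralBinom n ≤ 4^n := by
    have hs : (Nat.centralBinom n)^2 ≤ (4^n)^2 := by
      calc (Nat.centralBinom n)^2 ≤ (3*n+1) * (Nat.centralBinom n)^2 := by nlinarith
        _ ≤ 16^n := h1
        _ = (4^n)^2 := h16
    exact le_of_pow_le_pow_left₀ two_ne_zero (by positivity) hs
  have h4 : (4:ℕ) ≤ 4^n := by
    calc (4:ℕ) = 4^1 := (pow_one 4).symm
      _ ≤ 4^n := Nat.pow_le_pow_right (by norm_num) hn
  set q := (4:ℕ)^n with hq
  rw [h256]
  rw [h16] at h1 h16n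
  nlinarith [sq_nonneg q, sq_nonneg (Nat.centralBinom n), Nat.mul_le_mul hC (le_refl q)]

lemma count_zero_eq (N : ℕ) (S T : Finset (Fin N)) (hT : T ⊆ S) :
    (Finset.univ.filter (fun h : Fin N → Fin 5 =>
        S.filter (fun j => h j = 0) = T)).card
      = 4 ^ (S \ T).card * 5 ^ (Finset.univ \ S).card := by
  classical
  have hset : Finset.univ.filter (fun h : Fin N → Fin 5 => S.filter (fun j => h j = 0) = T)
      = Fintype.piFinset (fun j => if j ∈ T then ({0} : Finset (Fin 5))
          else if j ∈ S then Finset.univ.filter (fun x => x ≠ 0) else Finset.univ) := by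
    ext h
    simp only [Finset.mem_filter, Finset.mem_univ, true_and, Fintype.mem_piFinset]
    constructor
    · intro hEq j
      by_cases hjT : j ∈ T
      · have hmem : j ∈ S.filter (fun j => h j = 0) := hEq ▸ hjT
        simp only [hjT, if_true, Finset.mem_singleton]
        exact (Finset.mem_filter.mp hmem).2
      · by_cases hjS : j ∈ S
        · simp only [hjT, if_false, hjS, if_true, Finset.mem_filter, Finset.mem_univ, true_and]
          intro h0
          exact hjT (hEq ▸ Finset.mem_filter.mpr ⟨hjS, h0⟩)
        · simp [hjT, hjS]
    · intro hmem
      ext j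
      simp only [Finset.mem_filter]
      constructor
      · rintro ⟨hjS, h0⟩
        by_contra hjT
        have := hmem j
        simp only [hjT, if_false, hjS, if_true, Finset.mem_filter, Finset.mem_univ, true_and] at this
        exact this h0
      · intro hjT
        refine ⟨hT hjT, ?_⟩
        have := hmem j
        simpa only [hjT, if_true, Finset.mem_singleton] using this
  rw [hset, Fintype.card_piFinset]
  have hcard : ∀ j : Fin N, (if j ∈ T then ({0} : Finset (Fin 5))
      else if j ∈ S then Finset.univ.filter (fun x => x ≠ 0) else Finset.univ).card
      = if j ∈ T then 1 else if j ∈ S then 4 else 5 := by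
    intro j
    by_cases hjT : j ∈ T <;> by_cases hjS : j ∈ S <;> simp [hjT, hjS] <;> decide
  simp only [hcard]
  rw [← Finset.prod_sdiff (Finset.subset_univ S), ← Finset.prod_sdiff hT]
  have e1 : ∀ j ∈ Finset.univ \ S, (if j ∈ T then 1 else if j ∈ S then 4 else 5) = 5 := by
    intro j hj
    rw [Finset.mem_sdiff] at hj
    have h1 : j ∉ T := fun h => hj.2 (hT h)
    simp [hj.2, h1]
  have e2 : ∀ j ∈ S \ T, (if j ∈ T then 1 else if j ∈ S then 4 else 5) = 4 := by
    intro j hj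
    rw [Finset.mem_sdiff] at hj
    simp [hj.1, hj.2]
  have e3 : ∀ j ∈ T, (if j ∈ T then 1 else if j ∈ S then 4 else 5) = 1 := by
    intro j hj; simp [hj]
  rw [Finset.prod_congr rfl e1, Finset.prod_congr rfl e2, Finset.prod_congr rfl e3]
  simp [Finset.prod_const]
  ring

lemma count_coord_le (n N : ℕ) (hn : 1 ≤ n) (S : Finset (Fin N)) (hS : S.card = 2*n)
    (hN : 2*n ≤ N) :
    (Finset.univ.filter (fun h : Fin N → Fin 5 =>
        n ∣ (S.filter (fun j => h j = 0)).card)).card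
      ≤ (16^n + (2*n).choose n * 4^n + 1) * 5 ^ (N - 2*n) := by
  classical
  have hcompl : (Finset.univ \ S).card = N - 2*n := by
    rw [Finset.card_sdiff_of_subset (Finset.subset_univ S), hS]
    simp
  set 𝒯 : Finset (Finset (Fin N)) := S.powerset.filter (fun T => n ∣ T.card) with h𝒯
  have hsub : Finset.univ.filter (fun h : Fin N → Fin 5 =>
        n ∣ (S.filter (fun j => h j = 0)).card)
      ⊆ 𝒯.biUnion (fun T => Finset.univ.filter
          (fun h : Fin N → Fin 5 => S.filter (fun j => h j = 0) = T)) := by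
    intro h hh
    rw [Finset.mem_filter] at hh
    rw [Finset.mem_biUnion]
    refine ⟨S.filter (fun j => h j = 0), ?_, ?_⟩
    · rw [h𝒯, Finset.mem_filter, Finset.mem_powerset]
      exact ⟨Finset.filter_subset _ _, hh.2⟩
    · simp
  calc (Finset.univ.filter (fun h : Fin N → Fin 5 =>
        n ∣ (S.filter (fun j => h j = 0)).card)).card
      ≤ (𝒯.biUnion (fun T => Finset.univ.filter
          (fun h : Fin N → Fin 5 => S.filter (fun j => h j = 0) = T))).card :=
        Finset.card_le_card hsub
    _ ≤ ∑ T ∈ 𝒯, (Finset.univ.filter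
          (fun h : Fin N → Fin 5 => S.filter (fun j => h j = 0) = T)).card :=
        Finset.card_biUnion_le
    _ = ∑ T ∈ 𝒯, 4 ^ (S \ T).card * 5 ^ (N - 2*n) := by
        apply Finset.sum_congr rfl
        intro T hT
        rw [h𝒯, Finset.mem_filter, Finset.mem_powerset] at hT
        rw [count_zero_eq N S T hT.1, hcompl]
    _ ≤ (16^n + (2*n).choose n * 4^n + 1) * 5 ^ (N - 2*n) := by
        have hsub2 : 𝒯 ⊆ (Finset.powersetCard 0 S ∪ Finset.powersetCard n S)
            ∪ Finset.powersetCard (2*n) S := by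
          intro T hT
          rw [h𝒯, Finset.mem_filter, Finset.mem_powerset] at hT
          obtain ⟨hTS, m, hm⟩ := hT
          have hle : T.card ≤ 2*n := hS ▸ Finset.card_le_card hTS
          have hm3 : m = 0 ∨ m = 1 ∨ m = 2 := by
            rcases Nat.lt_or_ge m 3 with h | h
            · omega
            · exfalso; nlinarith [hm, hle]
          simp only [Finset.mem_union, Finset.mem_powersetCard]
          rcases hm3 with h | h | h <;> subst h
          · exact Or.inl (Or.inl ⟨hTS, by omega⟩)
          · exact Or.inl (Or.inr ⟨hTS, by omega⟩)
          · exact Or.inr ⟨hTS, by omega⟩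
        have step : ∀ (k : ℕ), ∑ T ∈ Finset.powersetCard k S, 4 ^ (S \ T).card * 5 ^ (N - 2*n)
            = (2*n).choose k * (4 ^ (2*n - k) * 5 ^ (N - 2*n)) := by
          intro k
          rw [Finset.sum_congr rfl (fun T hT => ?_), Finset.sum_const, smul_eq_mul,
            Finset.card_powersetCard, hS]
          rw [Finset.mem_powersetCard] at hT
          rw [Finset.card_sdiff_of_subset hT.1, hS, hT.2]
        calc ∑ T ∈ 𝒯, 4 ^ (S \ T).card * 5 ^ (N - 2*n)
            ≤ ∑ T ∈ (Finset.powersetCard 0 S ∪ Finset.powersetCard n S)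
                ∪ Finset.powersetCard (2*n) S, 4 ^ (S \ T).card * 5 ^ (N - 2*n) :=
              Finset.sum_le_sum_of_subset hsub2
          _ ≤ (∑ T ∈ Finset.powersetCard 0 S ∪ Finset.powersetCard n S,
                  4 ^ (S \ T).card * 5 ^ (N - 2*n))
              + ∑ T ∈ Finset.powersetCard (2*n) S, 4 ^ (S \ T).card * 5 ^ (N - 2*n) :=
              le_trans (Nat.le_add_right _ _) (le_of_eq (Finset.sum_union_inter))
          _ ≤ ((∑ T ∈ Finset.powersetCard 0 S, 4 ^ (S \ T).card * 5 ^ (N - 2*n))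
              + ∑ T ∈ Finset.powersetCard n S, 4 ^ (S \ T).card * 5 ^ (N - 2*n))
              + ∑ T ∈ Finset.powersetCard (2*n) S, 4 ^ (S \ T).card * 5 ^ (N - 2*n) := by
              gcongr
              exact le_trans (Nat.le_add_right _ _) (le_of_eq (Finset.sum_union_inter))
          _ ≤ (16^n + (2*n).choose n * 4^n + 1) * 5 ^ (N - 2*n) := by
              rw [step 0, step n, step (2*n)]
              simp only [Nat.choose_zero_right, Nat.choose_self, Nat.sub_zero, Nat.sub_self,
                pow_zero, one_mul, mul_one]
              have h16 : (4:ℕ) ^ (2*n) = 16^n := by rw [pow_mul]; norm_num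
              have h4n : 2*n - n = n := by omega
              rw [h16, h4n]
              ring_nf
              omega

lemma exists_good (n r N : ℕ) (hn : 1 ≤ n) (hN : 2*n ≤ N)
    (hlt : N.choose (2*n) * ((16^n + (2*n).choose n * 4^n + 1) * 5 ^ (N - 2*n)) ^ r
      < 5 ^ (N*r)) :
    ∃ X : Fin N → Fin r → ZMod n,
      ∀ S : Finset (Fin N), S.card = 2*n → ∑ j ∈ S, X j ≠ 0 := by
  classical
  haveI : NeZero n := ⟨by omega⟩
  set c : ℕ := (16^n + (2*n).choose n * 4^n + 1) * 5 ^ (N - 2*n) with hc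
  let X : (Fin r → Fin N → Fin 5) → Fin N → Fin r → ZMod n :=
    fun ω j i => if ω i j = 0 then 1 else 0
  set Bad : Finset (Fin r → Fin N → Fin 5) := Finset.univ.filter
    (fun ω => ∃ S : Finset (Fin N), S.card = 2*n ∧ ∑ j ∈ S, X ω j = 0) with hBad
  -- per-S count
  have key : ∀ S : Finset (Fin N), S.card = 2*n →
      (Finset.univ.filter (fun ω : Fin r → Fin N → Fin 5 => ∑ j ∈ S, X ω j = 0)).card
        ≤ c ^ r := by
    intro S hS
    have hset : Finset.univ.filter (fun ω : Fin r → Fin N → Fin 5 => ∑ j ∈ S, X ω j = 0)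
        = Fintype.piFinset (fun _ : Fin r => Finset.univ.filter
            (fun h : Fin N → Fin 5 => n ∣ (S.filter (fun j => h j = 0)).card)) := by
      ext ω
      simp only [Finset.mem_filter, Finset.mem_univ, true_and, Fintype.mem_piFinset]
      rw [funext_iff]
      apply forall_congr'
      intro i
      rw [Finset.sum_apply, Pi.zero_apply]
      have : ∀ j ∈ S, X ω j i = if ω i j = 0 then (1 : ZMod n) else 0 := fun j _ => rfl
      rw [Finset.sum_congr rfl this, Finset.sum_boole]
      exact ZMod.natCast_eq_zero_iff _ n
    rw [hset, Fintype.card_piFinset]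
    rw [Finset.prod_const, Finset.card_univ, Fintype.card_fin]
    exact Nat.pow_le_pow_left (count_coord_le n N hn S hS hN) r
  have hBadCard : Bad.card < Fintype.card (Fin r → Fin N → Fin 5) := by
    have hsub : Bad ⊆ (Finset.univ.filter (fun S : Finset (Fin N) => S.card = 2*n)).biUnion
        (fun S => Finset.univ.filter
          (fun ω : Fin r → Fin N → Fin 5 => ∑ j ∈ S, X ω j = 0)) := by
      intro ω hω
      rw [hBad, Finset.mem_filter] at hω
      obtain ⟨-, S, hS, hsum⟩ := hω
      rw [Finset.mem_biUnion]
      exact ⟨S, by simp [hS], by simp [hsum]⟩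
    have hScard : (Finset.univ.filter (fun S : Finset (Fin N) => S.card = 2*n)).card
        = N.choose (2*n) := by
      rw [← Finset.powerset_univ, ← Finset.powersetCard_eq_filter,
        Finset.card_powersetCard, Finset.card_univ, Fintype.card_fin]
    calc Bad.card
        ≤ ∑ S ∈ Finset.univ.filter (fun S : Finset (Fin N) => S.card = 2*n),
            (Finset.univ.filter
              (fun ω : Fin r → Fin N → Fin 5 => ∑ j ∈ S, X ω j = 0)).card :=
          le_trans (Finset.card_le_card hsub) Finset.card_biUnion_le
      _ ≤ ∑ S ∈ Finset.univ.filter (fun S : Finset (Fin N) => S.card = 2*n), c ^ r := by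
          apply Finset.sum_le_sum
          intro S hS
          exact key S (Finset.mem_filter.mp hS).2
      _ = N.choose (2*n) * c ^ r := by rw [Finset.sum_const, smul_eq_mul, hScard]
      _ < 5 ^ (N*r) := hlt
      _ = Fintype.card (Fin r → Fin N → Fin 5) := by
          rw [Fintype.card_fun]
          simp [← pow_mul, Nat.mul_comm]
  obtain ⟨ω, hω⟩ : ∃ ω : Fin r → Fin N → Fin 5, ω ∉ Bad := by
    by_contra hcon
    push_neg at hcon
    have : (Finset.univ : Finset (Fin r → Fin N → Fin 5)).card ≤ Bad.card :=
      Finset.card_le_card (fun x _ => hcon x)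
    rw [Finset.card_univ] at this
    omega
  refine ⟨X ω, fun S hS hsum => ?_⟩
  exact hω (by rw [hBad, Finset.mem_filter]; exact ⟨Finset.mem_univ _, S, hS, hsum⟩)

theorem egz_lower_bound_k2_explicit (n r : ℕ) (hn : 1 ≤ n) (hr : 1 ≤ r) :
    ∃ X : Fin (⌊(n / 2 : ℝ) *
          ((5 / 4 : ℝ) * (1 + (n : ℝ) ^ (-(1 : ℝ) / 2)) ^ (-(1 : ℝ) / (2 * n))) ^ r⌋₊) →
        (Fin r → ZMod n),
      ∀ S : Finset (Fin (⌊(n / 2 : ℝ) *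
          ((5 / 4 : ℝ) * (1 + (n : ℝ) ^ (-(1 : ℝ) / 2)) ^ (-(1 : ℝ) / (2 * n))) ^ r⌋₊)),
        S.card = 2 * n → ∑ j ∈ S, X j ≠ 0 := by
  have hc : (0:ℝ) < n := by exact_mod_cast hn
  have hc1 : (1:ℝ) ≤ n := by exact_mod_cast hn
  set β : ℝ := 1 + (n : ℝ) ^ (-(1 : ℝ) / 2) with hβdef
  set A : ℝ := (5 / 4 : ℝ) * β ^ (-(1 : ℝ) / (2 * (n:ℝ))) with hAdef
  set N : ℕ := ⌊(n / 2 : ℝ) * A ^ r⌋₊ with hNdef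
  have hβpos : (0:ℝ) < β := by
    have := Real.rpow_pos_of_pos hc (-(1:ℝ)/2)
    rw [hβdef]; linarith
  have hApos : (0:ℝ) < A := by
    rw [hAdef]; positivity
  rcases lt_or_ge N (2*n) with hN | hN
  · refine ⟨fun _ _ => 0, fun S hS => ?_⟩
    exfalso
    have : S.card ≤ N := by simpa using Finset.card_le_univ S
    omega
  · -- main case
    set B : ℕ := 16^n + (2*n).choose n * 4^n + 1 with hBdef
    have hkey : N.choose (2*n) * B ^ r < 5 ^ (2*n*r) := by
      -- real-valued estimates
      set s : ℝ := Real.sqrt n with hsdef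
      have hspos : 0 < s := Real.sqrt_pos.mpr hc
      have hs2 : s^2 = (n:ℝ) := Real.sq_sqrt hc.le
      have hinv : (n : ℝ) ^ (-(1 : ℝ) / 2) = s⁻¹ := by
        rw [neg_div, Real.rpow_neg hc.le, hsdef, Real.sqrt_eq_rpow]
      -- bound on B
      have hD : (Nat.centralBinom n * 4^n + 1 : ℝ) ≤ 16^n * s⁻¹ := by
        have hkn : (n:ℝ) * (Nat.centralBinom n * 4^n + 1 : ℝ)^2 ≤ 256^n := by
          have := key_nat n hn
          have := (Nat.cast_le (α := ℝ)).mpr this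
          push_cast at this
          convert this using 2 <;> push_cast <;> ring
        have hsq : ((s * (Nat.centralBinom n * 4^n + 1 : ℝ)))^2 ≤ ((16:ℝ)^n)^2 := by
          have h1 : ((16:ℝ)^n)^2 = 256^n := by
            rw [← pow_mul, mul_comm, pow_mul]; norm_num
          rw [mul_pow, hs2, h1]
          exact hkn
        have hle : s * (Nat.centralBinom n * 4^n + 1 : ℝ) ≤ 16^n :=
          le_of_pow_le_pow_left₀ two_ne_zero (by positivity) hsq
        rw [← mul_le_mul_iff_of_pos_left hspos, mul_comm ((16:ℝ)^n) s⁻¹, ← mul_assoc,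
          mul_inv_cancel₀ (ne_of_gt hspos), one_mul]
        exact hle
      have hB : (B : ℝ) ≤ 16^n * β := by
        rw [hBdef, hβdef, hinv]
        push_cast
        have : ((2*n).choose n : ℝ) = (Nat.centralBinom n : ℝ) := by
          rw [Nat.centralBinom_eq_two_mul_choose]
        rw [this]
        nlinarith [hD]
      -- A^(2n)
      have hA2n : A ^ (2*n) = (5/4:ℝ)^(2*n) * β⁻¹ := by
        rw [hAdef, mul_pow]
        congr 1
        rw [← Real.rpow_natCast (β ^ (-(1:ℝ) / (2 * (n:ℝ)))) (2*n),
          ← Real.rpow_mul hβpos.le]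
        have : (-(1:ℝ) / (2 * (n:ℝ))) * ((2*n : ℕ) : ℝ) = -1 := by
          push_cast
          field_simp
        rw [this, Real.rpow_neg_one]
      -- factorial bound
      have hfact : ((n:ℝ)/2)^(2*n) < ((2*n).factorial : ℝ) := by
        have he := Real.pow_div_factorial_le_exp (x := 2*(n:ℝ)) (by positivity) (2*n)
        have hfpos : (0:ℝ) < ((2*n).factorial : ℝ) := by
          exact_mod_cast Nat.factorial_pos (2*n)
        have h1 : (2*(n:ℝ))^(2*n) ≤ ((2*n).factorial : ℝ) * Real.exp (2*(n:ℝ)) := by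
          rw [div_le_iff₀ hfpos] at he
          linarith [he]
        have hexp2 : Real.exp 2 < 16 := by
          have h := Real.exp_one_lt_d9
          have : Real.exp 2 = Real.exp 1 * Real.exp 1 := by
            rw [← Real.exp_add]; norm_num
          nlinarith [Real.exp_pos 1]
        have hexpn : Real.exp (2*(n:ℝ)) = (Real.exp 2)^n := by
          rw [mul_comm, Real.exp_nat_mul]
        have h2 : ((n:ℝ)/2)^(2*n) * Real.exp (2*(n:ℝ)) < (2*(n:ℝ))^(2*n) := by
          rw [hexpn]
          have lhs_eq : ((n:ℝ)/2)^(2*n) * (Real.exp 2)^n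
              = (((n:ℝ)/2)^2 * Real.exp 2)^n := by
            rw [mul_pow, ← pow_mul, mul_comm 2 n]
          have rhs_eq : (2*(n:ℝ))^(2*n) = ((2*(n:ℝ))^2)^n := by
            rw [← pow_mul, mul_comm 2 n]
          rw [lhs_eq, rhs_eq]
          apply pow_lt_pow_left₀ _ (by positivity) (by omega)
          have hb1 : ((n:ℝ)/2)^2 * Real.exp 2 < ((n:ℝ)/2)^2 * 16 :=
            mul_lt_mul_of_pos_left hexp2 (by positivity)
          have hb2 : ((n:ℝ)/2)^2 * 16 = (2*(n:ℝ))^2 := by ring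
          linarith
        exact (mul_lt_mul_iff_of_pos_right (Real.exp_pos (2*(n:ℝ)))).mp (lt_of_lt_of_le h2 h1)
      -- final chain
      have hfloor : (N:ℝ) ≤ ((n:ℝ)/2) * A^r := by
        rw [hNdef]; exact Nat.floor_le (by positivity)
      have hfpos : (0:ℝ) < ((2*n).factorial : ℝ) := by
        exact_mod_cast Nat.factorial_pos (2*n)
      have hchoose : (N.choose (2*n) : ℝ) ≤ (N:ℝ)^(2*n) / ((2*n).factorial : ℝ) :=
        Nat.choose_le_pow_div (2*n) N
      have hb : ((5/4:ℝ)^(2*n) * β⁻¹) * (16^n * β) = 25^n := by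
        have hββ : β⁻¹ * β = 1 := inv_mul_cancel₀ (ne_of_gt hβpos)
        calc ((5/4:ℝ)^(2*n) * β⁻¹) * (16^n * β)
            = ((5/4:ℝ)^(2*n) * 16^n) * (β⁻¹ * β) := by ring
          _ = (5/4:ℝ)^(2*n) * 16^n := by rw [hββ, mul_one]
          _ = 25^n := by rw [pow_mul, ← mul_pow]; norm_num
      have e3 : (((n:ℝ)/2) * A^r)^(2*n) * (16^n * β)^r
          = ((n:ℝ)/2)^(2*n) * 25^(n*r) := by
        calc (((n:ℝ)/2) * A^r)^(2*n) * (16^n * β)^r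
            = ((n:ℝ)/2)^(2*n) * ((A^(2*n))^r * (16^n * β)^r) := by
              rw [mul_pow, pow_right_comm, mul_assoc]
          _ = ((n:ℝ)/2)^(2*n) * (((5/4:ℝ)^(2*n) * β⁻¹) * (16^n * β))^r := by
              rw [hA2n, ← mul_pow]
          _ = ((n:ℝ)/2)^(2*n) * 25^(n*r) := by rw [hb, ← pow_mul]
      have main : (N.choose (2*n) : ℝ) * (B:ℝ)^r < 25^(n*r) := by
        have e1 : (N.choose (2*n) : ℝ) * (B:ℝ)^r
            ≤ ((N:ℝ)^(2*n) / ((2*n).factorial : ℝ)) * (16^n * β)^r := by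
          apply mul_le_mul hchoose (pow_le_pow_left₀ (Nat.cast_nonneg B) hB r)
            (by positivity) (by positivity)
        have e2 : ((N:ℝ)^(2*n) / ((2*n).factorial : ℝ)) * (16^n * β)^r
            ≤ ((((n:ℝ)/2) * A^r)^(2*n) / ((2*n).factorial : ℝ)) * (16^n * β)^r := by
          gcongr
        have e4 : ((((n:ℝ)/2) * A^r)^(2*n) / ((2*n).factorial : ℝ)) * (16^n * β)^r
            = (((n:ℝ)/2)^(2*n) / ((2*n).factorial : ℝ)) * 25^(n*r) := by
          rw [div_mul_eq_mul_div, e3]; ring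
        have e5 : (((n:ℝ)/2)^(2*n) / ((2*n).factorial : ℝ)) * 25^(n*r)
            < 1 * 25^(n*r) := by
          apply mul_lt_mul_of_pos_right _ (by positivity)
          rw [div_lt_one hfpos]
          exact hfact
        calc (N.choose (2*n) : ℝ) * (B:ℝ)^r ≤ _ := e1
          _ ≤ _ := e2
          _ = _ := e4
          _ < 1 * 25^(n*r) := e5
          _ = 25^(n*r) := one_mul _
      have hNN : N.choose (2*n) * B ^ r < 25^(n*r) := by exact_mod_cast main
      have h525 : (5:ℕ)^(2*n*r) = 25^(n*r) := by
        rw [mul_assoc, pow_mul]; norm_num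
      rw [h525]
      exact hNN
    -- from hkey conclude
    have h2nN : 2*n*r + (N - 2*n)*r = N*r := by
      rw [← Nat.add_mul]
      congr 1
      omega
    have hlt : N.choose (2*n) * (B * 5 ^ (N - 2*n)) ^ r < 5 ^ (N*r) := by
      have h5pos : 0 < 5 ^ ((N - 2*n)*r) := Nat.pow_pos (by norm_num)
      calc N.choose (2*n) * (B * 5 ^ (N - 2*n)) ^ r
          = N.choose (2*n) * B ^ r * 5 ^ ((N - 2*n)*r) := by
            rw [mul_pow, ← pow_mul, mul_assoc]
        _ < 5 ^ (2*n*r) * 5 ^ ((N - 2*n)*r) := by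
            exact mul_lt_mul_of_pos_right hkey h5pos
        _ = 5 ^ (N*r) := by rw [← pow_add, h2nN]
    exact exists_good n r N hn hN hlt
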